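/- Let β > 2, z ≥ 0 and s > 0. Then ∫_s^∞ (1 − e^{−zs/t}) · t^{2/β − 1} dt = s^{2/β} · (β/2) · (φ_β(z) − 1), where φ_β(z) = e^{−z} + z^{2/β} γ(1 − 2/β, z). (This integral is the exponent appearing in the Laplace transform E[e^{−zf} | L = s] = exp(−a(φ_β(z) − 1)s^{2/β}) of the interference factor f conditioned on the path-loss factor L in the infinite Poisson model.) -/

import Mathlib

open MeasureTheory Real

/-- The lower incomplete gamma function `γ(α, z) = ∫_0^z t^(α-1) e^{-t} dt`. -/
noncomputable def lowerIncGamma (α z : ℝ) : ℝ :=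
  ∫ t in Set.Ioo (0:ℝ) z, t ^ (α - 1) * Real.exp (-t)

/-- `φ_β(z) = e^{-z} + z^{2/β} γ(1 - 2/β, z)`. -/
noncomputable def phiBeta (β z : ℝ) : ℝ :=
  Real.exp (-z) + z ^ (2 / β) * lowerIncGamma (1 - 2 / β) z

open Set Filter intervalIntegral

lemma rpow_int_aux (c z : ℝ) (hc0 : 0 < c) (hc1 : c < 1) (hz : 0 < z) :
    IntegrableOn (fun u : ℝ => u ^ (-c)) (Set.Ioc 0 z) :=
  (intervalIntegrable_iff_integrableOn_Ioc_of_le hz.le).1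
    (intervalIntegral.intervalIntegrable_rpow' (by linarith))

lemma intP1 (c z : ℝ) (hc0 : 0 < c) (hc1 : c < 1) (hz : 0 < z) :
    IntegrableOn (fun u : ℝ => (1 - Real.exp (-u)) * u ^ (-c - 1)) (Set.Ioc 0 z) := by
  refine Integrable.mono (rpow_int_aux c z hc0 hc1 hz) ?_ ?_
  · refine ContinuousOn.aestronglyMeasurable ?_ measurableSet_Ioc
    exact ((continuous_const.sub (Real.continuous_exp.comp continuous_neg)).continuousOn).mul
      (ContinuousOn.rpow_const continuousOn_id (fun u hu => Or.inl (ne_of_gt hu.1)))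
  · filter_upwards [ae_restrict_mem measurableSet_Ioc] with u hu
    have hu0 : (0:ℝ) < u := hu.1
    have h1 : 1 - Real.exp (-u) ≤ u := by nlinarith [Real.add_one_le_exp (-u)]
    have h2 : Real.exp (-u) ≤ 1 := by rw [Real.exp_le_one_iff]; linarith
    have h3 : (0:ℝ) ≤ u ^ (-c - 1) := Real.rpow_nonneg hu0.le _
    rw [Real.norm_eq_abs, Real.norm_eq_abs, abs_of_nonneg (Real.rpow_nonneg hu0.le _),
      abs_of_nonneg (mul_nonneg (by linarith) h3)]
    calc (1 - Real.exp (-u)) * u ^ (-c - 1) ≤ u * u ^ (-c - 1) := by gcongr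
      _ = u ^ (-c) := by
          rw [show u * u ^ (-c - 1) = u ^ (1:ℝ) * u ^ (-c - 1) by rw [Real.rpow_one],
            ← Real.rpow_add hu0]
          ring_nf

lemma intP2 (c z : ℝ) (hc0 : 0 < c) (hc1 : c < 1) (hz : 0 < z) :
    IntegrableOn (fun u : ℝ => u ^ (-c) * Real.exp (-u)) (Set.Ioc 0 z) := by
  refine Integrable.mono (rpow_int_aux c z hc0 hc1 hz) ?_ ?_
  · refine ContinuousOn.aestronglyMeasurable ?_ measurableSet_Ioc
    exact (ContinuousOn.rpow_const continuousOn_id (fun u hu => Or.inl (ne_of_gt hu.1))).mul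
      ((Real.continuous_exp.comp continuous_neg).continuousOn)
  · filter_upwards [ae_restrict_mem measurableSet_Ioc] with u hu
    have hu0 : (0:ℝ) < u := hu.1
    have h2 : Real.exp (-u) ≤ 1 := by rw [Real.exp_le_one_iff]; linarith
    rw [Real.norm_eq_abs, Real.norm_eq_abs, abs_of_nonneg (Real.rpow_nonneg hu0.le _),
      abs_of_nonneg (by positivity)]
    nlinarith [Real.rpow_nonneg hu0.le (-c), Real.exp_pos (-u)]

lemma deriv_aux (c : ℝ) (hc0 : 0 < c) (u : ℝ) (hu : u ≠ 0) :
    HasDerivAt (fun u : ℝ => (Real.exp (-u) - 1) * u ^ (-c) / c)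
      ((1 - Real.exp (-u)) * u ^ (-c - 1) - u ^ (-c) * Real.exp (-u) / c) u := by
  have h1 : HasDerivAt (fun u : ℝ => Real.exp (-u) - 1) (-Real.exp (-u)) u := by
    simpa using ((Real.hasDerivAt_exp (-u)).comp u (hasDerivAt_neg u)).sub_const 1
  have h2 : HasDerivAt (fun x : ℝ => x ^ (-c)) (-c * u ^ (-c - 1)) u :=
    Real.hasDerivAt_rpow_const (Or.inl hu)
  have := (h1.mul h2).div_const c
  refine this.congr_deriv ?_
  field_simp
  ring

lemma key (c z : ℝ) (hc0 : 0 < c) (hc1 : c < 1) (hz : 0 < z) :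
    ∫ u in Set.Ioo (0:ℝ) z, (1 - Real.exp (-u)) * u ^ (-c - 1)
      = (Real.exp (-z) - 1) * z ^ (-c) / c
        + (1/c) * ∫ u in Set.Ioo (0:ℝ) z, u ^ (-c) * Real.exp (-u) := by
  have hP1 : IntervalIntegrable (fun u : ℝ => (1 - Real.exp (-u)) * u ^ (-c - 1)) volume 0 z :=
    (intervalIntegrable_iff_integrableOn_Ioc_of_le hz.le).2 (intP1 c z hc0 hc1 hz)
  have hP2 : IntervalIntegrable (fun u : ℝ => u ^ (-c) * Real.exp (-u)) volume 0 z :=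
    (intervalIntegrable_iff_integrableOn_Ioc_of_le hz.le).2 (intP2 c z hc0 hc1 hz)
  have hint : IntervalIntegrable
      (fun u : ℝ => (1 - Real.exp (-u)) * u ^ (-c - 1) - u ^ (-c) * Real.exp (-u) / c)
      volume 0 z := hP1.sub (hP2.div_const c)
  have ha : Tendsto (fun u : ℝ => (Real.exp (-u) - 1) * u ^ (-c) / c)
      (nhdsWithin 0 (Set.Ioi 0)) (nhds 0) := by
    apply squeeze_zero_norm'
    · filter_upwards [self_mem_nhdsWithin] with u (hu : 0 < u)
      have h1 : 1 - Real.exp (-u) ≤ u := by nlinarith [Real.add_one_le_exp (-u)]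
      have h2 : Real.exp (-u) ≤ 1 := by rw [Real.exp_le_one_iff]; linarith
      have h3 : (0:ℝ) ≤ u ^ (-c) := Real.rpow_nonneg hu.le _
      calc ‖(Real.exp (-u) - 1) * u ^ (-c) / c‖
          = (1 - Real.exp (-u)) * u ^ (-c) / c := by
            rw [Real.norm_eq_abs, abs_div, abs_of_pos hc0, abs_mul,
              abs_of_nonpos (by linarith), abs_of_nonneg h3]; ring
        _ ≤ u * u ^ (-c) / c := by gcongr
        _ = u ^ (1 - c) / c := by
            rw [show (1:ℝ) - c = 1 + (-c) by ring, Real.rpow_add hu, Real.rpow_one]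
    · have : Tendsto (fun u : ℝ => u ^ (1 - c) / c) (nhdsWithin 0 (Set.Ioi 0))
          (nhds ((0:ℝ) ^ (1 - c) / c)) :=
        Tendsto.div_const ((Real.continuousAt_rpow_const 0 (1-c)
          (Or.inr (by linarith))).tendsto.mono_left nhdsWithin_le_nhds) c
      simpa [Real.zero_rpow (by linarith : (1:ℝ) - c ≠ 0)] using this
  have hb : Tendsto (fun u : ℝ => (Real.exp (-u) - 1) * u ^ (-c) / c)
      (nhdsWithin z (Set.Iio z)) (nhds ((Real.exp (-z) - 1) * z ^ (-c) / c)) :=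
    ((deriv_aux c hc0 z (ne_of_gt hz)).continuousAt.tendsto).mono_left nhdsWithin_le_nhds
  have ftc := intervalIntegral.integral_eq_sub_of_hasDerivAt_of_tendsto hz
    (fun u hu => deriv_aux c hc0 u (ne_of_gt hu.1)) hint ha hb
  rw [intervalIntegral.integral_sub hP1 (hP2.div_const c)] at ftc
  have e1 : ∀ f : ℝ → ℝ, ∫ u in (0:ℝ)..z, f u = ∫ u in Set.Ioo (0:ℝ) z, f u := by
    intro f
    rw [intervalIntegral.integral_of_le hz.le, MeasureTheory.integral_Ioc_eq_integral_Ioo]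
  rw [e1, e1] at ftc
  have e2 : ∫ u in Set.Ioo (0:ℝ) z, u ^ (-c) * Real.exp (-u) / c
      = (∫ u in Set.Ioo (0:ℝ) z, u ^ (-c) * Real.exp (-u)) / c := by
    rw [MeasureTheory.integral_div]
  rw [e2] at ftc
  have hcne : c ≠ 0 := ne_of_gt hc0
  field_simp at ftc ⊢
  linarith

theorem stmt_9 (β z s : ℝ) (hβ : 2 < β) (hz : 0 ≤ z) (hs : 0 < s) :
    ∫ t in Set.Ioi s, (1 - Real.exp (-(z * s) / t)) * t ^ (2 / β - 1)
      = s ^ (2 / β) * (β / 2) * (phiBeta β z - 1) := by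
  have hβ0 : (0:ℝ) < β := by linarith
  set c : ℝ := 2 / β with hc_def
  have hc0 : 0 < c := by positivity
  have hc1 : c < 1 := by rw [hc_def, div_lt_one hβ0]; linarith
  rcases eq_or_lt_of_le hz with rfl | hz0
  · simp [phiBeta, lowerIncGamma, Real.zero_rpow (ne_of_gt hc0)]
  · have hzs : 0 < z * s := mul_pos hz0 hs
    -- image of (0,z) under u ↦ z*s/u is (s,∞)
    have himg : (fun u : ℝ => z * s / u) '' Set.Ioo 0 z = Set.Ioi s := by
      ext t
      constructor
      · rintro ⟨u, ⟨hu0, huz⟩, rfl⟩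
        have h1 : z * s / z < z * s / u := div_lt_div_of_pos_left hzs hu0 huz
        have h2 : z * s / z = s := by field_simp
        rw [h2] at h1
        exact h1
      · intro ht
        have hts : s < t := ht
        have ht0 : 0 < t := hs.trans hts
        refine ⟨z * s / t, ⟨by positivity, ?_⟩, ?_⟩
        · rw [div_lt_iff₀ ht0]
          exact (mul_lt_mul_iff_right₀ hz0).2 hts
        · field_simp
    have hf' : ∀ u ∈ Set.Ioo (0:ℝ) z, HasDerivWithinAt (fun u : ℝ => z * s / u)
        (-(z * s / u ^ 2)) (Set.Ioo (0:ℝ) z) u := by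
      intro u hu
      have h := (hasDerivAt_inv (ne_of_gt hu.1)).const_mul (z * s)
      have h2 : HasDerivAt (fun u : ℝ => z * s / u) (z * s * -(u ^ 2)⁻¹) u := by
        simpa only [div_eq_mul_inv] using h
      have h3 : HasDerivAt (fun u : ℝ => z * s / u) (-(z * s / u ^ 2)) u := by
        convert h2 using 1
        field_simp
      exact h3.hasDerivWithinAt
    have hinj : Set.InjOn (fun u : ℝ => z * s / u) (Set.Ioo 0 z) := by
      intro a ha b hb h
      simp only at h
      rw [div_eq_div_iff (ne_of_gt ha.1) (ne_of_gt hb.1)] at h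
      exact (mul_left_cancel₀ (ne_of_gt hzs) h).symm
    have cov := integral_image_eq_integral_abs_deriv_smul measurableSet_Ioo hf' hinj
      (fun t => (1 - Real.exp (-(z * s) / t)) * t ^ (c - 1))
    rw [himg] at cov
    rw [cov]
    have congr1 : ∫ u in Set.Ioo (0:ℝ) z,
        |(-(z * s / u ^ 2))| • ((1 - Real.exp (-(z * s) / (z * s / u))) * (z * s / u) ^ (c - 1))
        = ∫ u in Set.Ioo (0:ℝ) z, (z * s) ^ c * ((1 - Real.exp (-u)) * u ^ (-c - 1)) := by
      apply setIntegral_congr_fun measurableSet_Ioo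
      intro u hu
      have hu0 : 0 < u := hu.1
      have habs : |(-(z * s / u ^ 2))| = z * s / u ^ 2 := by
        rw [abs_neg, abs_of_pos (by positivity)]
      have hexp : -(z * s) / (z * s / u) = -u := by
        field_simp
      have hpow : z * s / u ^ 2 * (z * s / u) ^ (c - 1) = (z * s) ^ c * u ^ (-c - 1) := by
        rw [Real.div_rpow hzs.le hu0.le, Real.rpow_sub hzs, Real.rpow_sub hu0, Real.rpow_one,
          show -c - 1 = -(c + 1) by ring, Real.rpow_neg hu0.le, Real.rpow_add hu0, Real.rpow_one]
        field_simp
      simp only [smul_eq_mul]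
      rw [habs, hexp]
      linear_combination (1 - Real.exp (-u)) * hpow
    rw [congr1, MeasureTheory.integral_const_mul, key c z hc0 hc1 hz0]
    have hγ : lowerIncGamma (1 - c) z = ∫ u in Set.Ioo (0:ℝ) z, u ^ (-c) * Real.exp (-u) := by
      rw [lowerIncGamma, show (1:ℝ) - c - 1 = -c by ring]
    rw [phiBeta, ← hc_def, ← hγ]
    set γ := lowerIncGamma (1 - c) z
    have hzc : z ^ c * z ^ (-c) = 1 := by
      rw [← Real.rpow_add hz0]; simp
    have hβ2 : β / 2 = 1 / c := by
      rw [hc_def]; field_simp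
    rw [Real.mul_rpow hz0.le hs.le, hβ2]
    have hcne : c ≠ 0 := ne_of_gt hc0
    field_simp
    linear_combination (Real.exp (-z) - 1) * hzc
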